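/- arXiv:2501.16676 — 2 statements merged into one kernel-verified Lean document; each statement's English description precedes it below -/
import Mathlib

section
/- For any distinct TPM (P_{x,e}) over finite nonempty state sets Ω_X and Ω_E, the flexibility is nonnegative: Syn(P) = EI(joint mechanism) − EI(P^X) − EI(P^E) ≥ 0. -/
/-- Effective information (base 2, with the convention `0 · log 0 = 0`) of a transition
probability matrix `P` whose rows are indexed by `ι` and whose output alphabet is `α`:
`EI(P) = (1/N) ∑_i ∑_j P_i(j) · log₂( N · P_i(j) / ∑_k P_k(j) )` with `N = |ι|`. -/
noncomputable def EI {ι α : Type} [Fintype ι] [Fintype α] (P : ι → α → ℝ) : ℝ :=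
  ∑ i, ∑ j, (1 / (Fintype.card ι : ℝ)) * P i j *
    Real.logb 2 ((Fintype.card ι : ℝ) * P i j / ∑ k, P k j)

/-- The joint mechanism of a distinct TPM: rows indexed by `Ω_X × Ω_E`, output `Ω_X`. -/
def jointMech {α ε : Type} (P : α → ε → α → ℝ) : (α × ε) → α → ℝ :=
  fun xe y => P xe.1 xe.2 y

/-- The individual mechanism `P^X` of a distinct TPM:
`P^X_x = (1/|Ω_E|) ∑_e P_{x,e}`. -/
noncomputable def indivMech {α ε : Type} [Fintype ε] (P : α → ε → α → ℝ) : α → α → ℝ :=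
  fun x y => (1 / (Fintype.card ε : ℝ)) * ∑ e, P x e y

/-- The external driving mechanism `P^E` of a distinct TPM:
`P^E_e = (1/|Ω_X|) ∑_x P_{x,e}`. -/
noncomputable def extMech {α ε : Type} [Fintype α] (P : α → ε → α → ℝ) : ε → α → ℝ :=
  fun e y => (1 / (Fintype.card α : ℝ)) * ∑ x, P x e y

/-- Flexibility (effective synergy) of a distinct TPM:
`Syn(P) = EI(joint mechanism) − EI(P^X) − EI(P^E)`. -/
noncomputable def flexibility {α ε : Type} [Fintype α] [Fintype ε]
    (P : α → ε → α → ℝ) : ℝ :=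
  EI (jointMech P) - EI (indivMech P) - EI (extMech P)

/-- Shannon entropy (in bits, with the convention `0 · log 0 = 0`) of a probability
vector `Q`. -/
noncomputable def Hvec {α : Type} [Fintype α] (Q : α → ℝ) : ℝ :=
  -∑ j, Q j * Real.logb 2 (Q j)

/-- Expansiveness of a distinct TPM. -/
noncomputable def expansiveness {α ε : Type} [Fintype α] [Fintype ε]
    (P : α → ε → α → ℝ) : ℝ :=
  (1 / (Fintype.card ε : ℝ)) *
      ∑ e, Hvec (fun y => (1 / (Fintype.card α : ℝ)) * ∑ x, P x e y)
    + (1 / (Fintype.card α : ℝ)) *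
      ∑ x, Hvec (fun y => (1 / (Fintype.card ε : ℝ)) * ∑ e, P x e y)

/-- Introversion of a distinct TPM. -/
noncomputable def introversion {α ε : Type} [Fintype α] [Fintype ε]
    (P : α → ε → α → ℝ) : ℝ :=
  2 * Real.logb 2 (Fintype.card α)
    - (1 / ((Fintype.card α : ℝ) * (Fintype.card ε : ℝ))) * ∑ x, ∑ e, Hvec (P x e)
    - Hvec (fun y => (1 / ((Fintype.card α : ℝ) * (Fintype.card ε : ℝ))) *
        ∑ x, ∑ e, P x e y)

/-- Gibbs' inequality. -/
lemma my_gibbs {ι : Type} [Fintype ι] (f g : ι → ℝ) (hf : ∀ i, 0 ≤ f i)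
    (hg : ∀ i, 0 ≤ g i) (hfg : ∀ i, g i = 0 → f i = 0)
    (hsum : ∑ i, g i ≤ ∑ i, f i) :
    0 ≤ ∑ i, f i * Real.log (f i / g i) := by
  have key : ∀ i, f i - g i ≤ f i * Real.log (f i / g i) := by
    intro i
    rcases eq_or_lt_of_le (hf i) with h0 | hpos
    · simpa [← h0] using hg i
    · have hgpos : 0 < g i := by
        rcases eq_or_lt_of_le (hg i) with h0' | h
        · exact absurd (hfg i h0'.symm) (by linarith)
        · exact h
      have h1 := Real.log_le_sub_one_of_pos (div_pos hgpos hpos)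
      rw [Real.log_div hgpos.ne' hpos.ne'] at h1
      rw [Real.log_div hpos.ne' hgpos.ne']
      have h2 : f i * (g i / f i - 1) = g i - f i := by field_simp
      nlinarith [mul_le_mul_of_nonneg_left h1 (hf i)]
  calc (0:ℝ) ≤ ∑ i, f i - ∑ i, g i := by linarith
    _ = ∑ i, (f i - g i) := (Finset.sum_sub_distrib _ _).symm
    _ ≤ _ := Finset.sum_le_sum fun i _ => key i

/-- For any distinct TPM `(P_{x,e})` over finite nonempty state sets `Ω_X, Ω_E`,
the flexibility is nonnegative: `Syn(P) = EI(joint) − EI(P^X) − EI(P^E) ≥ 0`. -/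
theorem statement7 {α ε : Type} [Fintype α] [Fintype ε] [Nonempty α] [Nonempty ε]
    (P : α → ε → α → ℝ) (hPnn : ∀ x e y, 0 ≤ P x e y) (hProw : ∀ x e, ∑ y, P x e y = 1) :
    0 ≤ EI (jointMech P) - EI (indivMech P) - EI (extMech P) := by
  classical
  have hN0 : (0:ℝ) < (Fintype.card α : ℝ) := by exact_mod_cast Fintype.card_pos
  have hM0 : (0:ℝ) < (Fintype.card ε : ℝ) := by exact_mod_cast Fintype.card_pos
  set N := (Fintype.card α : ℝ) with hNdef
  set M := (Fintype.card ε : ℝ) with hMdef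
  have hA0 : ∀ x y, 0 ≤ ∑ e, P x e y := fun x y => Finset.sum_nonneg fun e _ => hPnn x e y
  have hB0 : ∀ e y, 0 ≤ ∑ x, P x e y := fun e y => Finset.sum_nonneg fun x _ => hPnn x e y
  have hS0 : ∀ y, 0 ≤ ∑ x, ∑ e, P x e y := fun y => Finset.sum_nonneg fun x _ => hA0 x y
  have hPA : ∀ x e y, P x e y ≤ ∑ e', P x e' y := fun x e y =>
    Finset.single_le_sum (fun e' _ => hPnn x e' y) (Finset.mem_univ e)
  have hPB : ∀ x e y, P x e y ≤ ∑ x', P x' e y := fun x e y =>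
    Finset.single_le_sum (fun x' _ => hPnn x' e y) (Finset.mem_univ x)
  have hAS : ∀ x y, (∑ e, P x e y) ≤ ∑ x', ∑ e, P x' e y := fun x y =>
    Finset.single_le_sum (fun x' _ => hA0 x' y) (Finset.mem_univ x)
  have hSB : ∀ y, (∑ e, ∑ x, P x e y) = ∑ x, ∑ e, P x e y := fun y => Finset.sum_comm
  -- E1 : EI joint
  have E1 : EI (jointMech P)
      = ∑ x, ∑ e, ∑ y, (1/(N*M)) * P x e y *
          Real.logb 2 (N * M * P x e y / ∑ x', ∑ e', P x' e' y) := by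
    simp only [EI, jointMech, Fintype.card_prod, Fintype.sum_prod_type, Nat.cast_mul,
      hNdef, hMdef]
  -- E2 : EI indiv
  have E2 : EI (indivMech P)
      = ∑ x, ∑ e, ∑ y, (1/(N*M)) * P x e y *
          Real.logb 2 (N * (∑ e', P x e' y) / ∑ x', ∑ e', P x' e' y) := by
    rw [EI]
    refine Finset.sum_congr rfl fun x _ => ?_
    rw [Finset.sum_comm]
    refine Finset.sum_congr rfl fun y _ => ?_
    have hk : (∑ k, indivMech P k y) = (1/M) * ∑ x', ∑ e', P x' e' y := by
      simp only [indivMech, ← Finset.mul_sum]; rfl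
    rw [hk]
    have harg : (Fintype.card α : ℝ) * indivMech P x y / ((1/M) * ∑ x', ∑ e', P x' e' y)
        = N * (∑ e', P x e' y) / ∑ x', ∑ e', P x' e' y := by
      rw [show (Fintype.card α : ℝ) * indivMech P x y
          = (1/M) * (N * ∑ e', P x e' y) by simp only [indivMech]; ring]
      rw [mul_div_mul_left _ _ (by positivity : (1/M:ℝ) ≠ 0)]
    rw [harg]
    rw [show (1/(Fintype.card α : ℝ)) * indivMech P x y
        = (1/(N*M)) * ∑ e', P x e' y by simp only [indivMech]; ring]
    rw [Finset.mul_sum, Finset.sum_mul]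
  -- E3 : EI ext
  have E3' : EI (extMech P)
      = ∑ e, ∑ x, ∑ y, (1/(N*M)) * P x e y *
          Real.logb 2 (M * (∑ x', P x' e y) / ∑ x', ∑ e', P x' e' y) := by
    rw [EI]
    refine Finset.sum_congr rfl fun e _ => ?_
    rw [Finset.sum_comm]
    refine Finset.sum_congr rfl fun y _ => ?_
    have hk : (∑ k, extMech P k y) = (1/N) * ∑ x', ∑ e', P x' e' y := by
      simp only [extMech, ← Finset.mul_sum, hSB y]; rfl
    rw [hk]
    have harg : (Fintype.card ε : ℝ) * extMech P e y / ((1/N) * ∑ x', ∑ e', P x' e' y)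
        = M * (∑ x', P x' e y) / ∑ x', ∑ e', P x' e' y := by
      rw [show (Fintype.card ε : ℝ) * extMech P e y
          = (1/N) * (M * ∑ x', P x' e y) by simp only [extMech]; ring]
      rw [mul_div_mul_left _ _ (by positivity : (1/N:ℝ) ≠ 0)]
    rw [harg]
    rw [show (1/(Fintype.card ε : ℝ)) * extMech P e y
        = (1/(N*M)) * ∑ x', P x' e y by simp only [extMech]; ring]
    rw [Finset.mul_sum, Finset.sum_mul]
  have E3 : EI (extMech P)
      = ∑ x, ∑ e, ∑ y, (1/(N*M)) * P x e y *
          Real.logb 2 (M * (∑ x', P x' e y) / ∑ x', ∑ e', P x' e' y) := by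
    rw [E3']; exact Finset.sum_comm
  -- termwise identity
  have key : ∀ x e y,
      (1/(N*M)) * P x e y * Real.logb 2 (N * M * P x e y / ∑ x', ∑ e', P x' e' y)
      - (1/(N*M)) * P x e y * Real.logb 2 (N * (∑ e', P x e' y) / ∑ x', ∑ e', P x' e' y)
      - (1/(N*M)) * P x e y * Real.logb 2 (M * (∑ x', P x' e y) / ∑ x', ∑ e', P x' e' y)
      = (1/(N*M)) / Real.log 2 *
          (P x e y * Real.log (P x e y /
            ((∑ e', P x e' y) * (∑ x', P x' e y) / ∑ x', ∑ e', P x' e' y))) := by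
    intro x e y
    rcases eq_or_lt_of_le (hPnn x e y) with h0 | hpos
    · rw [← h0]; ring
    · have hA' : 0 < ∑ e', P x e' y := lt_of_lt_of_le hpos (hPA x e y)
      have hB' : 0 < ∑ x', P x' e y := lt_of_lt_of_le hpos (hPB x e y)
      have hS' : 0 < ∑ x', ∑ e', P x' e' y := lt_of_lt_of_le hA' (hAS x y)
      have hL : Real.logb 2 (N * M * P x e y / ∑ x', ∑ e', P x' e' y)
          - Real.logb 2 (N * (∑ e', P x e' y) / ∑ x', ∑ e', P x' e' y)
          - Real.logb 2 (M * (∑ x', P x' e y) / ∑ x', ∑ e', P x' e' y)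
          = Real.logb 2 (P x e y /
              ((∑ e', P x e' y) * (∑ x', P x' e y) / ∑ x', ∑ e', P x' e' y)) := by
        rw [div_div_eq_mul_div]
        rw [Real.logb_div (by positivity) hS'.ne', Real.logb_div (by positivity) hS'.ne',
          Real.logb_div (by positivity) hS'.ne',
          Real.logb_div (by positivity) (by positivity),
          Real.logb_mul (by positivity) hpos.ne', Real.logb_mul hN0.ne' hM0.ne',
          Real.logb_mul hN0.ne' hA'.ne', Real.logb_mul hM0.ne' hB'.ne',
          Real.logb_mul hpos.ne' hS'.ne', Real.logb_mul hA'.ne' hB'.ne']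
        ring
      rw [show (1/(N*M)) * P x e y * Real.logb 2 (N * M * P x e y / ∑ x', ∑ e', P x' e' y)
            - (1/(N*M)) * P x e y *
                Real.logb 2 (N * (∑ e', P x e' y) / ∑ x', ∑ e', P x' e' y)
            - (1/(N*M)) * P x e y *
                Real.logb 2 (M * (∑ x', P x' e y) / ∑ x', ∑ e', P x' e' y)
          = (1/(N*M)) * P x e y *
            (Real.logb 2 (N * M * P x e y / ∑ x', ∑ e', P x' e' y)
              - Real.logb 2 (N * (∑ e', P x e' y) / ∑ x', ∑ e', P x' e' y)
              - Real.logb 2 (M * (∑ x', P x' e y) / ∑ x', ∑ e', P x' e' y)) by ring, hL]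
      simp only [Real.logb]
      ring
  -- Gibbs step
  have hsum : (∑ x, ∑ e, ∑ y,
        (∑ e', P x e' y) * (∑ x', P x' e y) / ∑ x', ∑ e', P x' e' y)
      ≤ ∑ x, ∑ e, ∑ y, P x e y := by
    have reorder : ∀ (f : α → ε → α → ℝ),
        (∑ x, ∑ e, ∑ y, f x e y) = ∑ y, ∑ x, ∑ e, f x e y := fun f => by
      rw [show (∑ x, ∑ e, ∑ y, f x e y) = ∑ x, ∑ y, ∑ e, f x e y from
        Finset.sum_congr rfl fun x _ => Finset.sum_comm, Finset.sum_comm]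
    rw [reorder, reorder]
    refine Finset.sum_le_sum fun y _ => ?_
    have h1 : (∑ x, ∑ e, (∑ e', P x e' y) * (∑ x', P x' e y) / ∑ x', ∑ e', P x' e' y)
        = (∑ x', ∑ e', P x' e' y) * (∑ x', ∑ e', P x' e' y) / ∑ x', ∑ e', P x' e' y := by
      have inner : ∀ x, (∑ e, (∑ e', P x e' y) * (∑ x', P x' e y) / ∑ x', ∑ e', P x' e' y)
          = (∑ e', P x e' y) * (∑ x', ∑ e', P x' e' y) / ∑ x', ∑ e', P x' e' y := fun x => by
        rw [← Finset.sum_div, ← Finset.mul_sum, hSB y]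
      rw [Finset.sum_congr rfl fun x _ => inner x, ← Finset.sum_div, ← Finset.sum_mul]
    rw [h1]
    rcases eq_or_ne (∑ x', ∑ e', P x' e' y) 0 with h | h
    · simp [h]
    · rw [mul_div_assoc, div_self h, mul_one]
  have hg0 : 0 ≤ ∑ x, ∑ e, ∑ y, P x e y * Real.log (P x e y /
      ((∑ e', P x e' y) * (∑ x', P x' e y) / ∑ x', ∑ e', P x' e' y)) := by
    have H := my_gibbs (ι := α × ε × α) (fun p => P p.1 p.2.1 p.2.2)
      (fun p => (∑ e', P p.1 e' p.2.2) * (∑ x', P x' p.2.1 p.2.2) / ∑ x', ∑ e', P x' e' p.2.2)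
      (fun p => hPnn _ _ _)
      (fun p => div_nonneg (mul_nonneg (hA0 _ _) (hB0 _ _)) (hS0 _))
      (fun p hp => by
        rcases div_eq_zero_iff.mp hp with h | h
        · rcases mul_eq_zero.mp h with h' | h'
          · exact le_antisymm (h' ▸ hPA p.1 p.2.1 p.2.2) (hPnn _ _ _)
          · exact le_antisymm (h' ▸ hPB p.1 p.2.1 p.2.2) (hPnn _ _ _)
        · have hA'' : (∑ e', P p.1 e' p.2.2) = 0 :=
            le_antisymm (h ▸ hAS p.1 p.2.2) (hA0 _ _)
          exact le_antisymm (hA'' ▸ hPA p.1 p.2.1 p.2.2) (hPnn _ _ _))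
      (by simpa [Fintype.sum_prod_type] using hsum)
    simpa [Fintype.sum_prod_type] using H
  have hEq : (1/(N*M)) / Real.log 2 * ∑ x, ∑ e, ∑ y, (P x e y * Real.log (P x e y /
        ((∑ e', P x e' y) * (∑ x', P x' e y) / ∑ x', ∑ e', P x' e' y)))
      = ∑ x, ∑ e, ∑ y,
        ((1/(N*M)) * P x e y * Real.logb 2 (N * M * P x e y / ∑ x', ∑ e', P x' e' y)
        - (1/(N*M)) * P x e y *
            Real.logb 2 (N * (∑ e', P x e' y) / ∑ x', ∑ e', P x' e' y)
        - (1/(N*M)) * P x e y *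
            Real.logb 2 (M * (∑ x', P x' e y) / ∑ x', ∑ e', P x' e' y)) := by
    rw [Finset.mul_sum]
    refine Finset.sum_congr rfl fun x _ => ?_
    rw [Finset.mul_sum]
    refine Finset.sum_congr rfl fun e _ => ?_
    rw [Finset.mul_sum]
    exact Finset.sum_congr rfl fun y _ => (key x e y).symm
  rw [E1, E2, E3]
  simp only [← Finset.sum_sub_distrib]
  exact le_of_le_of_eq (mul_nonneg (div_nonneg (by positivity)
    (Real.log_pos one_lt_two).le) hg0) hEq
end

section
/- For any distinct TPM (P_{x,e}) over finite nonempty state sets Ω_X and Ω_E, the flexibility decomposes as Syn(P) = Exp(P) + Int(P) − 2·log₂|Ω_X|, where Exp is the expansiveness and Int is the introversion. -/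
lemma EI_eq {ι β : Type} [Fintype ι] [Fintype β] (P : ι → β → ℝ)
    (h : ∀ i j, 0 ≤ P i j) :
    EI P = Hvec (fun j => (1 / (Fintype.card ι : ℝ)) * ∑ i, P i j)
      - (1 / (Fintype.card ι : ℝ)) * ∑ i, Hvec (P i) := by
  classical
  unfold EI Hvec
  have key : ∀ i j, (1 / (Fintype.card ι : ℝ)) * P i j *
      Real.logb 2 ((Fintype.card ι : ℝ) * P i j / ∑ k, P k j)
    = (1 / (Fintype.card ι : ℝ)) * (P i j * Real.logb 2 (P i j))
      - (1 / (Fintype.card ι : ℝ)) *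
        (P i j * Real.logb 2 ((1 / (Fintype.card ι : ℝ)) * ∑ k, P k j)) := by
    intro i j
    rcases eq_or_lt_of_le (h i j) with h0 | h0
    · simp [← h0]
    · have hι : Nonempty ι := ⟨i⟩
      have hN : (0:ℝ) < Fintype.card ι := by exact_mod_cast Fintype.card_pos
      have hS : 0 < ∑ k, P k j :=
        Finset.sum_pos' (fun k _ => h k j) ⟨i, Finset.mem_univ i, h0⟩
      have harg : (Fintype.card ι : ℝ) * P i j / ∑ k, P k j
          = P i j / ((1 / (Fintype.card ι : ℝ)) * ∑ k, P k j) := by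
        field_simp
      rw [harg, Real.logb_div h0.ne' (by positivity)]
      ring
  calc (∑ i, ∑ j, (1 / (Fintype.card ι : ℝ)) * P i j *
        Real.logb 2 ((Fintype.card ι : ℝ) * P i j / ∑ k, P k j))
      = ∑ i, ∑ j, ((1 / (Fintype.card ι : ℝ)) * (P i j * Real.logb 2 (P i j))
        - (1 / (Fintype.card ι : ℝ)) *
          (P i j * Real.logb 2 ((1 / (Fintype.card ι : ℝ)) * ∑ k, P k j))) := by
        exact Finset.sum_congr rfl fun i _ => Finset.sum_congr rfl fun j _ => key i j
    _ = (-∑ j, (1 / (Fintype.card ι : ℝ)) * (∑ i, P i j) *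
          Real.logb 2 ((1 / (Fintype.card ι : ℝ)) * ∑ i, P i j))
        - (1 / (Fintype.card ι : ℝ)) * ∑ i, -∑ j, P i j * Real.logb 2 (P i j) := by
        simp only [Finset.sum_sub_distrib]
        have hA : ∑ i, ∑ j, (1 / (Fintype.card ι : ℝ)) * (P i j * Real.logb 2 (P i j))
            = (1 / (Fintype.card ι : ℝ)) * ∑ i, ∑ j, P i j * Real.logb 2 (P i j) := by
          rw [Finset.mul_sum]
          exact Finset.sum_congr rfl fun i _ => (Finset.mul_sum _ _ _).symm
        have hB : ∑ i, ∑ j, (1 / (Fintype.card ι : ℝ)) *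
              (P i j * Real.logb 2 ((1 / (Fintype.card ι : ℝ)) * ∑ k, P k j))
            = ∑ j, (1 / (Fintype.card ι : ℝ)) * (∑ i, P i j) *
              Real.logb 2 ((1 / (Fintype.card ι : ℝ)) * ∑ i, P i j) := by
          rw [Finset.sum_comm]
          refine Finset.sum_congr rfl fun j _ => ?_
          rw [Finset.mul_sum, Finset.sum_mul]
          exact Finset.sum_congr rfl fun i _ => by ring
        rw [hA, hB]
        simp only [Finset.sum_neg_distrib]
        ring

theorem avg_eq {α ε : Type} [Fintype α] [Fintype ε] (f : α → ε → ℝ) :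
    (1 / (Fintype.card α : ℝ)) * ∑ x, (1 / (Fintype.card ε : ℝ)) * ∑ e, f x e
      = (1 / ((Fintype.card α : ℝ) * (Fintype.card ε : ℝ))) * ∑ x, ∑ e, f x e := by
  rw [Finset.mul_sum, Finset.mul_sum]
  exact Finset.sum_congr rfl fun x _ => by ring

/-- For any distinct TPM `(P_{x,e})` over finite nonempty state sets `Ω_X, Ω_E`,
the flexibility decomposes as `Syn(P) = Exp(P) + Int(P) − 2·log₂|Ω_X|`. -/
theorem statement9 {α ε : Type} [Fintype α] [Fintype ε] [Nonempty α] [Nonempty ε]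
    (P : α → ε → α → ℝ) (hPnn : ∀ x e y, 0 ≤ P x e y) (hProw : ∀ x e, ∑ y, P x e y = 1) :
    flexibility P = expansiveness P + introversion P
      - 2 * Real.logb 2 (Fintype.card α) := by
  classical
  have hjnn : ∀ (p : α × ε) j, 0 ≤ jointMech P p j := fun p j => hPnn _ _ _
  have hinn : ∀ x j, 0 ≤ indivMech P x j := fun x j =>
    mul_nonneg (by positivity) (Finset.sum_nonneg fun e _ => hPnn _ _ _)
  have henn : ∀ e j, 0 ≤ extMech P e j := fun e j =>
    mul_nonneg (by positivity) (Finset.sum_nonneg fun x _ => hPnn _ _ _)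
  have hQj : (fun j => (1 / (Fintype.card (α × ε) : ℝ)) * ∑ p : α × ε, jointMech P p j)
      = fun j => (1 / ((Fintype.card α : ℝ) * (Fintype.card ε : ℝ))) *
        ∑ x, ∑ e, P x e j := by
    funext j
    rw [Fintype.card_prod, Fintype.sum_prod_type]
    push_cast
    rfl
  have hQi : (fun j => (1 / (Fintype.card α : ℝ)) * ∑ x, indivMech P x j)
      = fun j => (1 / ((Fintype.card α : ℝ) * (Fintype.card ε : ℝ))) *
        ∑ x, ∑ e, P x e j := by
    funext j
    exact avg_eq fun x e => P x e j
  have hQe : (fun j => (1 / (Fintype.card ε : ℝ)) * ∑ e, extMech P e j)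
      = fun j => (1 / ((Fintype.card α : ℝ) * (Fintype.card ε : ℝ))) *
        ∑ x, ∑ e, P x e j := by
    funext j
    rw [show (1 / (Fintype.card ε : ℝ)) * ∑ e, extMech P e j
        = (1 / ((Fintype.card ε : ℝ) * (Fintype.card α : ℝ))) * ∑ e, ∑ x, P x e j from
      avg_eq fun e x => P x e j]
    rw [mul_comm (Fintype.card ε : ℝ), Finset.sum_comm]
  have hJE : (1 / (Fintype.card (α × ε) : ℝ)) * ∑ p : α × ε, Hvec (jointMech P p)
      = (1 / ((Fintype.card α : ℝ) * (Fintype.card ε : ℝ))) * ∑ x, ∑ e, Hvec (P x e) := by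
    rw [Fintype.card_prod, Fintype.sum_prod_type]
    push_cast
    rfl
  unfold flexibility
  rw [EI_eq _ hjnn, EI_eq _ hinn, EI_eq _ henn, hQj, hQi, hQe, hJE]
  unfold expansiveness introversion
  have h4 : ∀ x, Hvec (indivMech P x)
      = Hvec (fun y => (1 / (Fintype.card ε : ℝ)) * ∑ e, P x e y) := fun _ => rfl
  have h5 : ∀ e, Hvec (extMech P e)
      = Hvec (fun y => (1 / (Fintype.card α : ℝ)) * ∑ x, P x e y) := fun _ => rfl
  simp only [h4, h5]
  ring
end
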